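/- Let α ∈ wEnd P_n. Then α is a regular element of the monoid wEnd P_n if and only if there exists an interval I of {1,…,n} (with the usual order) such that Iα = im(α) and |I| = |im(α)|. -/

import Mathlib

/-- `α` is a weak endomorphism of the path `P_n` (with vertices `0,…,n-1` standing for
`1,…,n`): `|iα - (i+1)α| ≤ 1` for all consecutive pairs of vertices. -/
def IsWEndo {n : ℕ} (f : Function.End (Fin n)) : Prop :=
  ∀ i : ℕ, ∀ h : i + 1 < n,
    |(((f ⟨i, by omega⟩ : Fin n) : ℕ) : ℤ) - (((f ⟨i + 1, h⟩ : Fin n) : ℕ) : ℤ)| ≤ 1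

/-- `α` is an endomorphism of the path `P_n`: `|iα - (i+1)α| = 1` for all consecutive
pairs of vertices. -/
def IsEndo {n : ℕ} (f : Function.End (Fin n)) : Prop :=
  ∀ i : ℕ, ∀ h : i + 1 < n,
    |(((f ⟨i, by omega⟩ : Fin n) : ℕ) : ℤ) - (((f ⟨i + 1, h⟩ : Fin n) : ℕ) : ℤ)| = 1

namespace RegWEndAux

/-- the values of `f` as a function `ℕ → ℕ`. -/
def F (n : ℕ) (f : Function.End (Fin n)) : ℕ → ℕ :=
  fun i => if h : i < n then ((f ⟨i, h⟩ : Fin n) : ℕ) else 0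

theorem F_eq {n : ℕ} (f : Function.End (Fin n)) {i : ℕ} (h : i < n) :
    F n f i = ((f ⟨i, h⟩ : Fin n) : ℕ) := dif_pos h

theorem F_eq' {n : ℕ} (f : Function.End (Fin n)) (p : Fin n) :
    F n f (p : ℕ) = ((f p : Fin n) : ℕ) := by
  rw [F_eq f p.isLt]

theorem F_step {n : ℕ} {f : Function.End (Fin n)} (hf : IsWEndo f) (i : ℕ) (h : i + 1 < n) :
    F n f (i + 1) ≤ F n f i + 1 ∧ F n f i ≤ F n f (i + 1) + 1 := by
  have h' : i < n := by omega
  have H := hf i h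
  rw [abs_le] at H
  rw [F_eq f h, F_eq f h']
  omega

/-- discrete intermediate value theorem for 1-Lipschitz maps `ℕ → ℕ`. -/
theorem ivt_nat (G : ℕ → ℕ) : ∀ (k a : ℕ),
    (∀ i, a ≤ i → i < a + k → (G (i + 1) ≤ G i + 1 ∧ G i ≤ G (i + 1) + 1)) →
    ∀ y, ((G a ≤ y ∧ y ≤ G (a + k)) ∨ (G (a + k) ≤ y ∧ y ≤ G a)) →
    ∃ c, a ≤ c ∧ c ≤ a + k ∧ G c = y := by
  intro k
  induction k with
  | zero =>
    intro a _ y hy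
    simp only [Nat.add_zero] at hy
    exact ⟨a, le_refl a, by omega, by omega⟩
  | succ k ih =>
    intro a hL y hy
    simp only [← Nat.add_assoc] at hy ⊢
    have hk := hL (a + k) (by omega) (by omega)
    by_cases hcase : (G a ≤ y ∧ y ≤ G (a + k)) ∨ (G (a + k) ≤ y ∧ y ≤ G a)
    · obtain ⟨c, h1, h2, h3⟩ := ih a (fun i hi hi' => hL i hi (by omega)) y hcase
      exact ⟨c, h1, by omega, h3⟩
    · exact ⟨a + k + 1, by omega, le_refl _, by omega⟩

/-- a 1-Lipschitz map `ℕ → ℕ` injective on an interval is strictly monotone there,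
with unit steps. -/
theorem mono_nat (G : ℕ → ℕ) : ∀ (k c : ℕ),
    (∀ i, c ≤ i → i < c + k → (G (i + 1) ≤ G i + 1 ∧ G i ≤ G (i + 1) + 1)) →
    (∀ i j, c ≤ i → i ≤ c + k → c ≤ j → j ≤ c + k → G i = G j → i = j) →
    (∀ j ≤ k, G (c + j) = G c + j) ∨ (∀ j ≤ k, G (c + j) + j = G c) := by
  intro k
  induction k with
  | zero =>
    intro c _ _
    left
    intro j hj
    interval_cases j
    simp
  | succ k ih =>
    intro c hL hinj
    have hk := hL (c + k) (by omega) (by omega)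
    have hne : G (c + k + 1) ≠ G (c + k) := fun h => by
      have := hinj (c + k + 1) (c + k) (by omega) (by omega) (by omega) (by omega) h
      omega
    rcases ih c (fun i hi hi' => hL i hi (by omega))
        (fun i j h1 h2 h3 h4 h5 => hinj i j h1 (by omega) h3 (by omega) h5) with hinc | hdec
    · rcases Nat.lt_or_ge (G (c + k + 1)) (G (c + k)) with hlt | hge
      · rcases Nat.eq_zero_or_pos k with rfl | hkpos
        · right
          intro j hj
          interval_cases j
          · simp
          · have h0 := hinc 0 (le_refl 0)
            simp only [Nat.add_zero] at h0 hlt hk ⊢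
            omega
        · exfalso
          have h1 := hinc k (le_refl k)
          have h2 := hinc (k - 1) (by omega)
          have he : G (c + k + 1) = G (c + (k - 1)) := by omega
          have := hinj (c + k + 1) (c + (k - 1)) (by omega) (by omega) (by omega) (by omega) he
          omega
      · left
        intro j hj
        rcases Nat.lt_or_ge j (k + 1) with h | h
        · have := hinc j (by omega)
          omega
        · have hj1 : j = k + 1 := by omega
          subst hj1
          simp only [← Nat.add_assoc]
          have h1 := hinc k (le_refl k)
          omega
    · rcases Nat.lt_or_ge (G (c + k)) (G (c + k + 1)) with hlt | hge
      · rcases Nat.eq_zero_or_pos k with rfl | hkpos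
        · left
          intro j hj
          interval_cases j
          · simp
          · have h0 := hdec 0 (le_refl 0)
            simp only [Nat.add_zero] at h0 hlt hk ⊢
            omega
        · exfalso
          have h1 := hdec k (le_refl k)
          have h2 := hdec (k - 1) (by omega)
          have he : G (c + k + 1) = G (c + (k - 1)) := by omega
          have := hinj (c + k + 1) (c + (k - 1)) (by omega) (by omega) (by omega) (by omega) he
          omega
      · right
        intro j hj
        rcases Nat.lt_or_ge j (k + 1) with h | h
        · have := hdec j (by omega)
          omega
        · have hj1 : j = k + 1 := by omega
          subst hj1
          simp only [← Nat.add_assoc]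
          have h1 := hdec k (le_refl k)
          omega

/-- discrete IVT for weak endomorphisms of the path. -/
theorem ivt_fin {n : ℕ} {f : Function.End (Fin n)} (hf : IsWEndo f) (p q : Fin n) (hpq : p ≤ q)
    (y : Fin n) (hy : (f p ≤ y ∧ y ≤ f q) ∨ (f q ≤ y ∧ y ≤ f p)) :
    ∃ c : Fin n, p ≤ c ∧ c ≤ q ∧ f c = y := by
  have hpq' : (p : ℕ) ≤ (q : ℕ) := hpq
  have hq : (p : ℕ) + ((q : ℕ) - (p : ℕ)) = (q : ℕ) := by omega
  have hL : ∀ i, (p : ℕ) ≤ i → i < (p : ℕ) + ((q : ℕ) - (p : ℕ)) →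
      (F n f (i + 1) ≤ F n f i + 1 ∧ F n f i ≤ F n f (i + 1) + 1) := by
    intro i hi hi'
    exact F_step hf i (by have := q.isLt; omega)
  have hy' : (F n f (p : ℕ) ≤ (y : ℕ) ∧ (y : ℕ) ≤ F n f ((p : ℕ) + ((q : ℕ) - (p : ℕ)))) ∨
      (F n f ((p : ℕ) + ((q : ℕ) - (p : ℕ))) ≤ (y : ℕ) ∧ (y : ℕ) ≤ F n f (p : ℕ)) := by
    rw [hq, F_eq' f p, F_eq' f q]
    rcases hy with ⟨h1, h2⟩ | ⟨h1, h2⟩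
    · exact Or.inl ⟨h1, h2⟩
    · exact Or.inr ⟨h1, h2⟩
  obtain ⟨c, hc1, hc2, hc3⟩ := ivt_nat (F n f) ((q : ℕ) - (p : ℕ)) (p : ℕ) hL (y : ℕ) hy'
  have hcn : c < n := by have := q.isLt; omega
  refine ⟨⟨c, hcn⟩, hc1, by rw [Fin.le_def]; simpa using by omega, ?_⟩
  apply Fin.ext
  rw [← F_eq f hcn]
  exact hc3

theorem range_ordConnected {n : ℕ} {f : Function.End (Fin n)} (hf : IsWEndo f) :
    (Set.range f).OrdConnected := by
  refine ⟨fun u hu v hv z hz => ?_⟩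
  obtain ⟨p, rfl⟩ := hu
  obtain ⟨q, rfl⟩ := hv
  rw [Set.mem_Icc] at hz
  rcases le_total p q with h | h
  · obtain ⟨c, _, _, hc⟩ := ivt_fin hf p q h z (Or.inl hz)
    exact ⟨c, hc⟩
  · obtain ⟨c, _, _, hc⟩ := ivt_fin hf q p h z (Or.inr hz)
    exact ⟨c, hc⟩

/-- the clamped inverse construction. -/
def mkInv (n cv dv : ℕ) (hdv : dv < n) (e : ℕ → ℕ) : Function.End (Fin n) :=
  fun y => ⟨min dv (cv + e (y : ℕ)), by omega⟩

theorem mkInv_isWEndo {n cv dv : ℕ} (hdv : dv < n) {e : ℕ → ℕ}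
    (he : ∀ i, e (i + 1) ≤ e i + 1 ∧ e i ≤ e (i + 1) + 1) :
    IsWEndo (mkInv n cv dv hdv e) := by
  intro i h
  show |((min dv (cv + e i) : ℕ) : ℤ) - ((min dv (cv + e (i + 1)) : ℕ) : ℤ)| ≤ 1
  rw [abs_le]
  have := he i
  omega

end RegWEndAux

open RegWEndAux
/-- `α ∈ wEnd P_n` is regular in `wEnd P_n` iff some order interval `I` of the vertex set
satisfies `Iα = im α` and `|I| = |im α|`. -/
theorem regular_wEnd_path_iff (n : ℕ) (f : Function.End (Fin n)) (hf : IsWEndo f) :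
    (∃ g : Function.End (Fin n), IsWEndo g ∧ f * g * f = f) ↔
      ∃ I : Set (Fin n), I.OrdConnected ∧ f '' I = Set.range f ∧
        I.ncard = (Set.range f).ncard := by
  constructor
  · rintro ⟨g, hg, hfg⟩
    have hmul : ∀ x, f (g (f x)) = f x := fun x => congrFun hfg x
    have hI2 : f '' (g '' Set.range f) = Set.range f := by
      apply Set.Subset.antisymm
      · exact (Set.image_subset_range f _)
      · rintro y ⟨x, rfl⟩
        exact ⟨g (f x), ⟨f x, ⟨x, rfl⟩, rfl⟩, hmul x⟩
    refine ⟨g '' Set.range f, ?_, hI2, ?_⟩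
    · refine ⟨fun x hx y hy z hz => ?_⟩
      obtain ⟨u, hu, rfl⟩ := hx
      obtain ⟨v, hv, rfl⟩ := hy
      rw [Set.mem_Icc] at hz
      rcases le_total u v with h | h
      · obtain ⟨c, hc1, hc2, hc3⟩ := ivt_fin hg u v h z (Or.inl hz)
        exact ⟨c, (range_ordConnected hf).out hu hv ⟨hc1, hc2⟩, hc3⟩
      · obtain ⟨c, hc1, hc2, hc3⟩ := ivt_fin hg v u h z (Or.inr hz)
        exact ⟨c, (range_ordConnected hf).out hv hu ⟨hc1, hc2⟩, hc3⟩
    · apply le_antisymm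
      · exact Set.ncard_image_le (Set.toFinite _)
      · calc (Set.range f).ncard = (f '' (g '' Set.range f)).ncard := by rw [hI2]
          _ ≤ (g '' Set.range f).ncard := Set.ncard_image_le (Set.toFinite _)
  · rintro ⟨I, hIoc, hfI, hcard⟩
    rcases Nat.eq_zero_or_pos n with hn | hn
    · subst hn
      exact ⟨f, hf, funext fun x => x.elim0⟩
    · have hne : I.Nonempty := by
        by_contra h
        rw [Set.not_nonempty_iff_eq_empty] at h
        have h0 : f ⟨0, hn⟩ ∈ Set.range f := ⟨_, rfl⟩
        rw [← hfI, h] at h0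
        obtain ⟨x, hx, _⟩ := h0
        exact hx
      have hfin : I.Finite := Set.toFinite I
      have htne : hfin.toFinset.Nonempty := (Set.Finite.toFinset_nonempty hfin).2 hne
      set c := hfin.toFinset.min' htne with hc
      set d := hfin.toFinset.max' htne with hd
      have hcI : c ∈ I := by
        have := hfin.toFinset.min'_mem htne
        rwa [Set.Finite.mem_toFinset] at this
      have hdI : d ∈ I := by
        have := hfin.toFinset.max'_mem htne
        rwa [Set.Finite.mem_toFinset] at this
      have hmem : ∀ x ∈ I, c ≤ x ∧ x ≤ d := fun x hx =>
        ⟨hfin.toFinset.min'_le x ((Set.Finite.mem_toFinset _).2 hx),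
         hfin.toFinset.le_max' x ((Set.Finite.mem_toFinset _).2 hx)⟩
      have hmem' : ∀ x : Fin n, c ≤ x → x ≤ d → x ∈ I := fun x h1 h2 =>
        hIoc.out hcI hdI ⟨h1, h2⟩
      have hinjOn : Set.InjOn f I :=
        Set.injOn_of_ncard_image_eq (by rw [hfI, hcard]) hfin
      have hcd : (c : ℕ) ≤ (d : ℕ) := (hmem c hcI).2
      have hdn : (d : ℕ) < n := d.isLt
      have hL : ∀ i, (c : ℕ) ≤ i → i < (c : ℕ) + ((d : ℕ) - (c : ℕ)) →
          (F n f (i + 1) ≤ F n f i + 1 ∧ F n f i ≤ F n f (i + 1) + 1) :=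
        fun i hi hi' => F_step hf i (by omega)
      have hinj : ∀ i j, (c : ℕ) ≤ i → i ≤ (c : ℕ) + ((d : ℕ) - (c : ℕ)) →
          (c : ℕ) ≤ j → j ≤ (c : ℕ) + ((d : ℕ) - (c : ℕ)) → F n f i = F n f j → i = j := by
        intro i j h1 h2 h3 h4 h5
        have hi : i < n := by omega
        have hj : j < n := by omega
        rw [F_eq f hi, F_eq f hj] at h5
        have hiI : (⟨i, hi⟩ : Fin n) ∈ I := hmem' _ (by rw [Fin.le_def]; exact h1)
          (by rw [Fin.le_def]; simpa using by omega)
        have hjI : (⟨j, hj⟩ : Fin n) ∈ I := hmem' _ (by rw [Fin.le_def]; exact h3)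
          (by rw [Fin.le_def]; simpa using by omega)
        have := hinjOn hiI hjI (Fin.ext h5)
        simpa using congrArg Fin.val this
      have hFc : F n f (c : ℕ) = ((f c : Fin n) : ℕ) := F_eq' f c
      rcases mono_nat (F n f) ((d : ℕ) - (c : ℕ)) (c : ℕ) hL hinj with hinc | hdec
      · -- increasing case
        refine ⟨mkInv n (c : ℕ) (d : ℕ) hdn (fun y => y - F n f (c : ℕ)),
          mkInv_isWEndo hdn (fun i => by omega), ?_⟩
        funext z
        have hz : f z ∈ f '' I := by rw [hfI]; exact ⟨z, rfl⟩
        obtain ⟨x, hxI, hxz⟩ := hz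
        obtain ⟨hcx, hxd⟩ := hmem x hxI
        have hcx' : (c : ℕ) ≤ (x : ℕ) := hcx
        have hxd' : (x : ℕ) ≤ (d : ℕ) := hxd
        have hx1 := hinc ((x : ℕ) - (c : ℕ)) (by omega)
        have hx2 : (c : ℕ) + ((x : ℕ) - (c : ℕ)) = (x : ℕ) := by omega
        rw [hx2, F_eq' f x] at hx1
        have hgx : mkInv n (c : ℕ) (d : ℕ) hdn (fun y => y - F n f (c : ℕ)) (f z) = x := by
          apply Fin.ext
          show min (d : ℕ) ((c : ℕ) + (((f z : Fin n) : ℕ) - F n f (c : ℕ))) = (x : ℕ)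
          rw [← hxz]
          omega
        show f (mkInv n (c : ℕ) (d : ℕ) hdn (fun y => y - F n f (c : ℕ)) (f z)) = f z
        rw [hgx, hxz]
      · -- decreasing case
        refine ⟨mkInv n (c : ℕ) (d : ℕ) hdn (fun y => F n f (c : ℕ) - y),
          mkInv_isWEndo hdn (fun i => by omega), ?_⟩
        funext z
        have hz : f z ∈ f '' I := by rw [hfI]; exact ⟨z, rfl⟩
        obtain ⟨x, hxI, hxz⟩ := hz
        obtain ⟨hcx, hxd⟩ := hmem x hxI
        have hcx' : (c : ℕ) ≤ (x : ℕ) := hcx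
        have hxd' : (x : ℕ) ≤ (d : ℕ) := hxd
        have hx1 := hdec ((x : ℕ) - (c : ℕ)) (by omega)
        have hx2 : (c : ℕ) + ((x : ℕ) - (c : ℕ)) = (x : ℕ) := by omega
        rw [hx2, F_eq' f x] at hx1
        have hgx : mkInv n (c : ℕ) (d : ℕ) hdn (fun y => F n f (c : ℕ) - y) (f z) = x := by
          apply Fin.ext
          show min (d : ℕ) ((c : ℕ) + (F n f (c : ℕ) - ((f z : Fin n) : ℕ))) = (x : ℕ)
          rw [← hxz]
          omega
        show f (mkInv n (c : ℕ) (d : ℕ) hdn (fun y => F n f (c : ℕ) - y) (f z)) = f z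
        rw [hgx, hxz]
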